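/- Let (e_n) be a sequence in a Banach space X and 𝓕 a Borel filter on ℕ (as a subset of {0,1}^ℕ) such that (e_n) is an 𝓕-basis for X with continuous coordinate functionals, and let E : X → ℝ^ℕ be the coordinate map. Then (a_n) ∈ E[X] if and only if: for every l ∈ ℕ there exists k ∈ ℕ such that { m ∈ ℕ : ‖∑_{n=1}^m a_n e_n − ∑_{n=1}^k a_n e_n‖ < 1/l } ∈ 𝓕. -/

import Mathlib

open Filter MeasureTheory

variable {X : Type*} [NormedAddCommGroup X] [NormedSpace ℝ X]

/-- `θ(x, a, ε) = { m : ‖x − ∑_{n<m} a n • e n‖ < ε }`. -/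
def thetaSet (e : ℕ → X) (x : X) (a : ℕ → ℝ) (ε : ℝ) : Set ℕ :=
  {m : ℕ | ‖x - ∑ n ∈ Finset.range m, a n • e n‖ < ε}

/-- The characteristic function identifying `℘(ℕ)` with the Cantor space `ℕ → Bool`. -/
noncomputable def chi (s : Set ℕ) : ℕ → Bool := fun n =>
  @decide (n ∈ s) (Classical.propDecidable _)

/-- Let `(e n)` be an `𝓕`-basis for a Banach space `X` with respect to a
Borel filter `𝓕` (as a subset of `{0,1}^ℕ`), with continuous coordinate functionals
`(f n)`. Then a scalar sequence `(a n)` lies in the range of the coordinate map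
`E x = (f n x)ₙ` iff for every `l ≥ 1` there is `k` with
`{ m : ‖∑_{n<m} a n • e n − ∑_{n<k} a n • e n‖ < 1/l } ∈ 𝓕`. -/
theorem range_of_coordinate_map [CompleteSpace X]
    (e : ℕ → X) (f : ℕ → X →L[ℝ] ℝ)
    (hbi : ∀ k n, f k (e n) = if k = n then 1 else 0)
    (F : Set (ℕ → Bool)) (hFborel : MeasurableSet F)
    (hfilter : (∀ s t : Set ℕ, chi s ∈ F → s ⊆ t → chi t ∈ F) ∧
      (∀ s t : Set ℕ, chi s ∈ F → chi t ∈ F → chi (s ∩ t) ∈ F) ∧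
      chi (∅ : Set ℕ) ∉ F ∧ (∀ s : Set ℕ, (sᶜ).Finite → chi s ∈ F))
    (hFbasis : ∀ (x : X) (ε : ℝ), 0 < ε →
      chi (thetaSet e x (fun n => f n x) ε) ∈ F)
    (huniq : ∀ (x : X) (a : ℕ → ℝ),
      (∀ ε : ℝ, 0 < ε → chi (thetaSet e x a ε) ∈ F) → ∀ k, a k = f k x) :
    ∀ a : ℕ → ℝ,
      (∃ x : X, ∀ n, f n x = a n) ↔
        ∀ l : ℕ, 1 ≤ l → ∃ k : ℕ,
          chi {m : ℕ | ‖(∑ n ∈ Finset.range m, a n • e n) -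
            ∑ n ∈ Finset.range k, a n • e n‖ < (l : ℝ)⁻¹} ∈ F := by
  obtain ⟨hmono, hinter, hempty, hcofin⟩ := hfilter
  have hne : ∀ s : Set ℕ, chi s ∈ F → s.Nonempty := by
    intro s hs
    rcases s.eq_empty_or_nonempty with h | h
    · exact absurd (h ▸ hs) hempty
    · exact h
  intro a
  set P : ℕ → X := fun m => ∑ n ∈ Finset.range m, a n • e n with hP
  constructor
  · rintro ⟨x, hx⟩ l hl
    have hl0 : (0:ℝ) < l := by exact_mod_cast hl
    have hε : (0:ℝ) < (2*l:ℝ)⁻¹ := by positivity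
    have hS := hFbasis x _ hε
    have ha : (fun n => f n x) = a := funext hx
    rw [ha] at hS
    obtain ⟨k, hk⟩ := hne _ hS
    refine ⟨k, hmono _ _ hS ?_⟩
    intro m hm
    simp only [thetaSet, Set.mem_setOf_eq] at hm hk ⊢
    have h1 : ‖P m - P k‖ ≤ ‖x - P m‖ + ‖x - P k‖ := by
      have heq : P m - P k = -(x - P m) + (x - P k) := by abel
      calc ‖P m - P k‖ = ‖-(x - P m) + (x - P k)‖ := by rw [heq]
        _ ≤ ‖-(x - P m)‖ + ‖x - P k‖ := norm_add_le _ _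
        _ = ‖x - P m‖ + ‖x - P k‖ := by rw [norm_neg]
    have h2 : (2*l:ℝ)⁻¹ + (2*l:ℝ)⁻¹ = (l:ℝ)⁻¹ := by
      rw [mul_inv]; ring
    calc ‖P m - P k‖ ≤ ‖x - P m‖ + ‖x - P k‖ := h1
      _ < (2*l:ℝ)⁻¹ + (2*l:ℝ)⁻¹ := add_lt_add hm hk
      _ = (l:ℝ)⁻¹ := h2
  · intro h
    choose k hk using fun l : ℕ => h (l + 1) (Nat.le_add_left 1 l)
    have hcast : ∀ l : ℕ, ((l + 1 : ℕ) : ℝ)⁻¹ = ((l : ℝ) + 1)⁻¹ := by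
      intro l; push_cast; ring
    have key : ∀ l l' : ℕ,
        ‖P (k l) - P (k l')‖ < ((l:ℝ)+1)⁻¹ + ((l':ℝ)+1)⁻¹ := by
      intro l l'
      obtain ⟨m, hm, hm'⟩ := hne _ (hinter _ _ (hk l) (hk l'))
      simp only [Set.mem_setOf_eq] at hm hm'
      have heq : P (k l) - P (k l') = -(P m - P (k l)) + (P m - P (k l')) := by abel
      calc ‖P (k l) - P (k l')‖
          = ‖-(P m - P (k l)) + (P m - P (k l'))‖ := by rw [heq]
        _ ≤ ‖-(P m - P (k l))‖ + ‖P m - P (k l')‖ := norm_add_le _ _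
        _ = ‖P m - P (k l)‖ + ‖P m - P (k l')‖ := by rw [norm_neg]
        _ < ((l:ℝ)+1)⁻¹ + ((l':ℝ)+1)⁻¹ := by
            rw [← hcast l, ← hcast l']; exact add_lt_add hm hm'
    have hCauchy : CauchySeq (fun l => P (k l)) := by
      rw [Metric.cauchySeq_iff]
      intro ε hε
      obtain ⟨N, hN⟩ := exists_nat_gt (2 / ε)
      refine ⟨N, fun m hm n hn => ?_⟩
      have hNpos : (0:ℝ) < N + 1 := by positivity
      have hinv : ((N:ℝ)+1)⁻¹ < ε / 2 := by
        rw [inv_lt_iff_one_lt_mul₀ hNpos]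
        have h2 : 2 / ε < (N:ℝ) + 1 := by linarith
        calc (1:ℝ) = (2/ε) * (ε/2) := by field_simp
          _ < ((N:ℝ)+1) * (ε/2) := by
              apply mul_lt_mul_of_pos_right h2; positivity
          _ = (ε/2) * ((N:ℝ)+1) := by ring
      have hmN : ((m:ℝ)+1)⁻¹ ≤ ((N:ℝ)+1)⁻¹ := by
        apply inv_anti₀ hNpos
        have : (N:ℝ) ≤ m := by exact_mod_cast hm
        linarith
      have hnN : ((n:ℝ)+1)⁻¹ ≤ ((N:ℝ)+1)⁻¹ := by
        apply inv_anti₀ hNpos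
        have : (N:ℝ) ≤ n := by exact_mod_cast hn
        linarith
      have := key m n
      rw [dist_eq_norm]
      linarith
    obtain ⟨x, hx⟩ := cauchySeq_tendsto_of_complete hCauchy
    have hlim : ∀ l : ℕ, ‖x - P (k l)‖ ≤ ((l:ℝ)+1)⁻¹ := by
      intro l
      have ht : Tendsto (fun l' => ‖P (k l') - P (k l)‖) atTop
          (nhds ‖x - P (k l)‖) := ((hx.sub tendsto_const_nhds).norm)
      have hg : Tendsto (fun l' : ℕ => ((l':ℝ)+1)⁻¹ + ((l:ℝ)+1)⁻¹) atTop
          (nhds (0 + ((l:ℝ)+1)⁻¹)) := by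
        apply Tendsto.add _ tendsto_const_nhds
        have := tendsto_one_div_add_atTop_nhds_zero_nat (𝕜 := ℝ)
        simpa [one_div] using this
      rw [zero_add] at hg
      exact le_of_tendsto_of_tendsto ht hg
        (Filter.Eventually.of_forall fun l' => (key l' l).le)
    have hθ : ∀ ε : ℝ, 0 < ε → chi (thetaSet e x a ε) ∈ F := by
      intro ε hε
      obtain ⟨l, hl⟩ := exists_nat_gt (2 / ε)
      refine hmono _ _ (hk l) ?_
      intro m hm
      simp only [Set.mem_setOf_eq] at hm
      simp only [thetaSet, Set.mem_setOf_eq]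
      have hsum : ((l + 1 : ℕ) : ℝ)⁻¹ + ((l + 1 : ℕ) : ℝ)⁻¹ < ε := by
        rw [hcast]
        have hpos : (0:ℝ) < (l:ℝ) + 1 := by positivity
        have h2 : 2 / ε < (l:ℝ) + 1 := by linarith
        have : ((l:ℝ)+1)⁻¹ < ε / 2 := by
          rw [inv_lt_iff_one_lt_mul₀ hpos]
          calc (1:ℝ) = (2/ε) * (ε/2) := by field_simp
            _ < ((l:ℝ)+1) * (ε/2) := by
                apply mul_lt_mul_of_pos_right h2; positivity
            _ = (ε/2) * ((l:ℝ)+1) := by ring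
        linarith
      have hlimit := hlim l
      rw [← hcast l] at hlimit
      have heq : x - P m = (x - P (k l)) + -(P m - P (k l)) := by abel
      calc ‖x - P m‖ = ‖(x - P (k l)) + -(P m - P (k l))‖ := by rw [heq]
        _ ≤ ‖x - P (k l)‖ + ‖-(P m - P (k l))‖ := norm_add_le _ _
        _ = ‖x - P (k l)‖ + ‖P m - P (k l)‖ := by rw [norm_neg]
        _ < ((l + 1 : ℕ) : ℝ)⁻¹ + ((l + 1 : ℕ) : ℝ)⁻¹ :=
            add_lt_add_of_le_of_lt hlimit hm
        _ < ε := hsum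
    exact ⟨x, fun n => (huniq x a hθ n).symm⟩
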